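/- For a single-qubit density matrix ρ, the maximum fidelity achievable with the maximally imaginary state |+̂⟩ = (|0⟩+i|1⟩)/√2 under real channels equals (1 + |tr(ρ σ_y)|)/2, i.e., the fidelity of imaginarity of a qubit state is F_I(ρ) = (1 + |Im ρ_{01}|·2)/2 = (1 + |tr(ρ σ_y)|)/2. -/

import Mathlib

open Matrix ComplexOrder

noncomputable def sigmaY : Matrix (Fin 2) (Fin 2) ℂ := !![0, -Complex.I; Complex.I, 0]

/-- Projector onto the maximally imaginary state |+̂⟩ = (|0⟩ + i|1⟩)/√2. -/
noncomputable def Pplus : Matrix (Fin 2) (Fin 2) ℂ :=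
  (1/2 : ℂ) • !![1, -Complex.I; Complex.I, 1]

lemma traceA (ρ K : Matrix (Fin 2) (Fin 2) ℂ)
 (h00 : (ρ 0 0).im = 0) (h11 : (ρ 1 1).im = 0)
 (h10re : (ρ 1 0).re = (ρ 0 1).re) (h10im : (ρ 1 0).im = -(ρ 0 1).im)
 (hK : ∀ a b, ((K a b)).im = 0) :
 ((K * ρ * Kᴴ) * Pplus).trace.re
   = ((Kᴴ * K) * ρ).trace.re / 2
     - (ρ 0 1).im * ((K 0 0).re * (K 1 1).re - (K 0 1).re * (K 1 0).re) := by
  simp [Pplus, Matrix.trace, Matrix.mul_apply, Fin.sum_univ_two, Matrix.conjTranspose_apply,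
    Complex.add_re, Complex.mul_re, Complex.mul_im, Complex.add_im, hK, h00, h11, h10re, h10im,
    Matrix.smul_apply, Matrix.diag]
  ring

lemma traceB (K : Matrix (Fin 2) (Fin 2) ℂ) (hK : ∀ a b, ((K a b)).im = 0) :
 |(K 0 0).re * (K 1 1).re - (K 0 1).re * (K 1 0).re| ≤ ((Kᴴ * K)).trace.re / 2 := by
  have h : ((Kᴴ * K)).trace.re = (K 0 0).re^2 + (K 0 1).re^2 + (K 1 0).re^2 + (K 1 1).re^2 := by
    simp [Matrix.trace, Matrix.mul_apply, Fin.sum_univ_two, Matrix.conjTranspose_apply,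
      Complex.add_re, Complex.mul_re, hK, Matrix.diag]
    ring
  rw [h, abs_le]
  constructor <;> nlinarith [sq_nonneg ((K 0 0).re + (K 1 1).re), sq_nonneg ((K 0 0).re - (K 1 1).re), sq_nonneg ((K 0 1).re + (K 1 0).re), sq_nonneg ((K 0 1).re - (K 1 0).re)]

/-- The fidelity of imaginarity of a qubit state: the supremum over real channels
(CPTP maps with real Kraus operators) of the fidelity of the output with |+̂⟩
equals (1 + |tr(ρ σ_y)|)/2, and it is attained. -/
theorem fidelity_of_imaginarity_qubit (ρ : Matrix (Fin 2) (Fin 2) ℂ)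
    (hρ : ρ.PosSemidef) (htr : ρ.trace = 1) :
    IsGreatest {x : ℝ | ∃ (n : ℕ) (K : Fin n → Matrix (Fin 2) (Fin 2) ℂ),
        (∀ j a b, ((K j) a b).im = 0) ∧
        (∑ j, (K j)ᴴ * K j = 1) ∧
        x = ((∑ j, K j * ρ * (K j)ᴴ) * Pplus).trace.re}
      (((1 + ‖(ρ * sigmaY).trace‖) / 2 : ℝ)) := by
  have hherm : ρᴴ = ρ := hρ.1
  have h10 : ρ 1 0 = starRingEnd ℂ (ρ 0 1) := by
    conv_lhs => rw [← hherm]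
    simp [Matrix.conjTranspose_apply]
  have h10re : (ρ 1 0).re = (ρ 0 1).re := by rw [h10]; simp
  have h10im : (ρ 1 0).im = -(ρ 0 1).im := by rw [h10]; simp
  have h00 : (ρ 0 0).im = 0 := by
    have := congrFun (congrFun hherm 0) 0
    simp [Matrix.conjTranspose_apply, Complex.ext_iff] at this
    linarith
  have h11 : (ρ 1 1).im = 0 := by
    have := congrFun (congrFun hherm 1) 1
    simp [Matrix.conjTranspose_apply, Complex.ext_iff] at this
    linarith
  have hsum : ρ 0 0 + ρ 1 1 = 1 := by
    simpa [Matrix.trace, Fin.sum_univ_two, Matrix.diag] using htr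
  have hsumre : (ρ 0 0).re + (ρ 1 1).re = 1 := by
    have := congrArg Complex.re hsum
    simpa using this
  have habs : ‖(ρ * sigmaY).trace‖ = 2 * |(ρ 0 1).im| := by
    have h : (ρ * sigmaY).trace = ((-2 * (ρ 0 1).im : ℝ) : ℂ) := by
      simp [sigmaY, Matrix.trace, Matrix.mul_apply, Fin.sum_univ_two, Matrix.diag, h10,
        Complex.ext_iff, Complex.add_re, Complex.add_im, Complex.mul_re, Complex.mul_im]
      ring
    rw [h, Complex.norm_real, Real.norm_eq_abs, abs_mul]
    norm_num
  set y := (ρ 0 1).im with hy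
  constructor
  · -- membership: pick identity or X depending on sign of y
    rcases le_or_gt y 0 with hle | hlt
    · refine ⟨1, fun _ => 1, ?_, ?_, ?_⟩
      · intro j a b
        simp [Matrix.one_apply, apply_ite Complex.im]
      · simp
      · have hval := traceA ρ 1 h00 h11 h10re h10im
          (by intro a b; simp [Matrix.one_apply, apply_ite Complex.im])
        simp only [Fin.sum_univ_one, Matrix.conjTranspose_one, Matrix.one_mul, Matrix.mul_one] at hval ⊢
        rw [hval]
        simp [Matrix.one_apply, htr, habs, abs_of_nonpos hle]
        ring
    · refine ⟨1, fun _ => !![0,1;1,0], ?_, ?_, ?_⟩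
      · intro j a b
        fin_cases a <;> fin_cases b <;> simp
      · simp [Fin.sum_univ_one]
        ext a b
        fin_cases a <;> fin_cases b <;> simp [Matrix.mul_apply, Fin.sum_univ_two, Matrix.one_apply, Matrix.conjTranspose_apply]
      · have hX : ((!![0,1;1,0] : Matrix (Fin 2) (Fin 2) ℂ))ᴴ * !![0,1;1,0] = 1 := by
          ext a b
          fin_cases a <;> fin_cases b <;> simp [Matrix.mul_apply, Fin.sum_univ_two, Matrix.one_apply, Matrix.conjTranspose_apply]
        have hval := traceA ρ !![0,1;1,0] h00 h11 h10re h10im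
          (by intro a b; fin_cases a <;> fin_cases b <;> simp)
        simp only [Fin.sum_univ_one] at *
        rw [hval, hX]
        simp [htr, habs, abs_of_pos hlt]
        ring
  · -- upper bound
    rintro x ⟨n, K, hKim, hKsum, rfl⟩
    have hsplit : ((∑ j, K j * ρ * (K j)ᴴ) * Pplus).trace.re
        = ∑ j, ((K j * ρ * (K j)ᴴ) * Pplus).trace.re := by
      rw [Finset.sum_mul, Matrix.trace_sum, Complex.re_sum]
    rw [hsplit]
    have hvals : ∀ j, ((K j * ρ * (K j)ᴴ) * Pplus).trace.re
        = (((K j)ᴴ * K j) * ρ).trace.re / 2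
          - y * (((K j) 0 0).re * ((K j) 1 1).re - ((K j) 0 1).re * ((K j) 1 0).re) := by
      intro j; exact traceA ρ (K j) h00 h11 h10re h10im (hKim j)
    simp only [hvals]
    rw [Finset.sum_sub_distrib]
    have hg : ∑ j, (((K j)ᴴ * K j) * ρ).trace.re / 2 = 1 / 2 := by
      rw [← Finset.sum_div]
      congr 1
      rw [← Complex.re_sum, ← Matrix.trace_sum, ← Finset.sum_mul, hKsum, Matrix.one_mul, htr]
      simp
    rw [hg, ← Finset.mul_sum]
    set D := ∑ j, (((K j) 0 0).re * ((K j) 1 1).re - ((K j) 0 1).re * ((K j) 1 0).re) with hD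
    have hDbound : |D| ≤ 1 := by
      calc |D| ≤ ∑ j, |(((K j) 0 0).re * ((K j) 1 1).re - ((K j) 0 1).re * ((K j) 1 0).re)| :=
            Finset.abs_sum_le_sum_abs _ _
        _ ≤ ∑ j, (((K j)ᴴ * K j)).trace.re / 2 :=
            Finset.sum_le_sum (fun j _ => traceB (K j) (hKim j))
        _ = 1 := by
            rw [← Finset.sum_div, ← Complex.re_sum, ← Matrix.trace_sum, hKsum]
            simp [Matrix.trace_one]
    have : y * D ≥ -|y| := by
      have := abs_mul y D
      have h2 : |y * D| ≤ |y| := by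
        rw [abs_mul]
        calc |y| * |D| ≤ |y| * 1 := by
              exact mul_le_mul_of_nonneg_left hDbound (abs_nonneg y)
          _ = |y| := mul_one _
      linarith [neg_abs_le (y * D)]
    rw [habs]
    linarith
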